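/- Let 0 < ℓ < r be real numbers and set a = e^{ℓ−r}. For all s, t ∈ ℂ with |s| = |t| = 1, writing ψ(s) = s/(e^ℓ − s) and χ(t) = t/(e^r − t), one has 2·Re( (s ψ(s) − a t χ(t))/(s − a t) − (−s − s·conj(ψ(s)) − a t χ(t))/(s − a t) ) − Re( ψ(s) + conj(ψ(s)) + 1 ) = ((1 − e^{2(ℓ−r)})/|s − e^{ℓ−r} t|²) · ((e^{2ℓ} − 1)/|e^ℓ − s|²). (Note s ≠ a t automatically since |s| = 1 and |a t| = a < 1.) -/

import Mathlib

set_option maxHeartbeats 1000000 in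
/-- The central computation for the free unitary multiplicative Lévy process: for
`0 < ℓ < r`, `a = e^{ℓ-r}`, `s, t` on the unit circle, `ψ = s/(e^ℓ - s)`, `χ = t/(e^r - t)`,
the boundary expression equals the product of the two Poisson kernels. -/
theorem stmt_6 (ℓ r : ℝ) (hℓ : 0 < ℓ) (hℓr : ℓ < r)
    (a : ℝ) (ha : a = Real.exp (ℓ - r))
    (s t : ℂ) (hs : ‖s‖ = 1) (ht : ‖t‖ = 1)
    (ψ χ : ℂ) (hψ : ψ = s / ((Real.exp ℓ : ℂ) - s)) (hχ : χ = t / ((Real.exp r : ℂ) - t)) :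
    2 * ((s * ψ - (a : ℂ) * t * χ) / (s - (a : ℂ) * t) -
          (-s - s * starRingEnd ℂ ψ - (a : ℂ) * t * χ) / (s - (a : ℂ) * t)).re -
      (ψ + starRingEnd ℂ ψ + 1).re =
    ((1 - Real.exp (2 * (ℓ - r))) / ‖s - (Real.exp (ℓ - r) : ℂ) * t‖ ^ 2) *
      ((Real.exp (2 * ℓ) - 1) / ‖(Real.exp ℓ : ℂ) - s‖ ^ 2) := by
  set E := Real.exp ℓ with hE
  have hE1 : 1 < E := Real.one_lt_exp_iff.mpr hℓ
  have ha1 : a < 1 := by rw [ha]; exact Real.exp_lt_one_iff.mpr (by linarith)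
  have ha0 : 0 < a := ha ▸ Real.exp_pos _
  have h2lr : Real.exp (2 * (ℓ - r)) = a ^ 2 := by
    rw [two_mul, Real.exp_add, ← ha, pow_two]
  have h2l : Real.exp (2 * ℓ) = E ^ 2 := by
    rw [two_mul, Real.exp_add, ← hE, pow_two]
  rw [h2lr, h2l, ← ha]
  -- nonvanishing
  have hs0 : s ≠ 0 := by intro h; simp [h] at hs
  have ht0 : t ≠ 0 := by intro h; simp [h] at ht
  have hEs : (E : ℂ) - s ≠ 0 := by
    refine sub_ne_zero.mpr fun h => ?_
    have := congrArg norm h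
    rw [hs, Complex.norm_real, Real.norm_eq_abs, abs_of_pos (by linarith)] at this
    linarith
  have hEs1 : (E : ℂ) * s - 1 ≠ 0 := by
    refine sub_ne_zero.mpr fun h => ?_
    have := congrArg norm h
    rw [norm_mul, hs, norm_one, Complex.norm_real, Real.norm_eq_abs,
      abs_of_pos (by linarith)] at this
    linarith
  have hsat : s - (a : ℂ) * t ≠ 0 := by
    refine sub_ne_zero.mpr fun h => ?_
    have := congrArg norm h
    rw [hs, norm_mul, ht, Complex.norm_real, Real.norm_eq_abs, abs_of_pos ha0] at this
    linarith
  have htas : t - (a : ℂ) * s ≠ 0 := by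
    refine sub_ne_zero.mpr fun h => ?_
    have := congrArg norm h
    rw [ht, norm_mul, hs, Complex.norm_real, Real.norm_eq_abs, abs_of_pos ha0] at this
    linarith
  -- conjugates on the circle
  have hcs : starRingEnd ℂ s = s⁻¹ := by
    have h1 : s * starRingEnd ℂ s = 1 := by
      rw [Complex.mul_conj]
      norm_cast
      rw [Complex.normSq_eq_norm_sq, hs]; norm_num
    exact (inv_eq_of_mul_eq_one_right h1).symm
  have hct : starRingEnd ℂ t = t⁻¹ := by
    have h1 : t * starRingEnd ℂ t = 1 := by
      rw [Complex.mul_conj]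
      norm_cast
      rw [Complex.normSq_eq_norm_sq, ht]; norm_num
    exact (inv_eq_of_mul_eq_one_right h1).symm
  have key : ∀ z : ℂ, ((‖z‖ : ℝ) : ℂ) ^ 2 = z * starRingEnd ℂ z := fun z => by
    rw [Complex.mul_conj]; norm_cast
    rw [Complex.normSq_eq_norm_sq]
  have hEsi : (E : ℂ) - s⁻¹ ≠ 0 := by
    have h : (E : ℂ) - s⁻¹ = ((E : ℂ) * s - 1) / s := by field_simp
    rw [h]; exact div_ne_zero hEs1 hs0
  have hsti : s⁻¹ - (a : ℂ) * t⁻¹ ≠ 0 := by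
    have h : s⁻¹ - (a : ℂ) * t⁻¹ = (t - (a : ℂ) * s) / (s * t) := by field_simp
    rw [h]; exact div_ne_zero htas (mul_ne_zero hs0 ht0)
  -- conj ψ
  have hcψ : starRingEnd ℂ ψ = 1 / ((E : ℂ) * s - 1) := by
    rw [hψ, map_div₀, map_sub, Complex.conj_ofReal, hcs]
    rw [div_eq_div_iff hEsi hEs1]
    field_simp
  set P : ℂ := ψ + starRingEnd ℂ ψ + 1 with hPdef
  have hconjP : starRingEnd ℂ P = P := by
    rw [hPdef]; simp only [map_add, map_one, Complex.conj_conj]; ring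
  have hP : P = s * ((E : ℂ) ^ 2 - 1) / (((E : ℂ) - s) * ((E : ℂ) * s - 1)) := by
    rw [hPdef, hcψ, hψ]
    rw [div_add_div _ _ hEs hEs1, div_add_one (mul_ne_zero hEs hEs1)]
    congr 1
    ring
  -- the χ terms cancel
  have hW : (s * ψ - (a : ℂ) * t * χ) / (s - (a : ℂ) * t) -
      (-s - s * starRingEnd ℂ ψ - (a : ℂ) * t * χ) / (s - (a : ℂ) * t) =
      s * P / (s - (a : ℂ) * t) := by
    rw [div_sub_div_same]
    congr 1
    rw [hPdef]; ring
  rw [hW]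
  have hconjZ : starRingEnd ℂ (s * P / (s - (a : ℂ) * t)) =
      s⁻¹ * P / (s⁻¹ - (a : ℂ) * t⁻¹) := by
    simp only [map_div₀, map_mul, map_sub, hcs, hct, hconjP, Complex.conj_ofReal]
  have main : s * P / (s - (a : ℂ) * t) + starRingEnd ℂ (s * P / (s - (a : ℂ) * t)) - P =
      ((((1 - a ^ 2) / ‖s - (a : ℂ) * t‖ ^ 2) * ((E ^ 2 - 1) / ‖(E : ℂ) - s‖ ^ 2) : ℝ) : ℂ) := by
    rw [hconjZ]
    push_cast
    rw [key (s - (a : ℂ) * t), key ((E : ℂ) - s)]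
    simp only [map_sub, map_mul, Complex.conj_ofReal, hcs, hct]
    have hfac : ((E : ℂ) ^ 2 - 1) / (((E : ℂ) - s) * (((E : ℂ) * s - 1) / s)) =
        s * ((E : ℂ) ^ 2 - 1) / (((E : ℂ) - s) * ((E : ℂ) * s - 1)) := by
      rw [div_eq_div_iff (by
          refine mul_ne_zero hEs (div_ne_zero hEs1 hs0)) (mul_ne_zero hEs hEs1)]
      field_simp
    rw [show s⁻¹ - (a : ℂ) * t⁻¹ = (t - (a : ℂ) * s) / (s * t) by field_simp,
      show (E : ℂ) - s⁻¹ = ((E : ℂ) * s - 1) / s by field_simp,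
      hfac, hP]
    generalize s * ((E : ℂ) ^ 2 - 1) / (((E : ℂ) - s) * ((E : ℂ) * s - 1)) = Q
    have htas' : -(s * (a : ℂ)) + t ≠ 0 := by rw [neg_add_eq_sub, mul_comm]; exact htas
    field_simp
    linear_combination (-(Q * t * (a : ℂ))) * mul_inv_cancel₀ htas'
  have h2re : 2 * (s * P / (s - (a : ℂ) * t)).re =
      (s * P / (s - (a : ℂ) * t) + starRingEnd ℂ (s * P / (s - (a : ℂ) * t))).re := by
    rw [Complex.add_conj]; simp
  rw [h2re, ← Complex.sub_re, main, Complex.ofReal_re]
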